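/- arXiv:2507.19322 — 3 statements merged into one kernel-verified Lean document; each statement's English description precedes it below -/
import Mathlib

section
/- Fix an integer i ≥ 1 and let ψ = 1/φ with φ = (1+√5)/2. Suppose a sequence {m_t}_{t≥i} of nonnegative reals satisfies m_i = 1 and m_{t+1} = m_t + (1/(t(t+1)))·∑_{s=i}^{t} m_s for all t ≥ i. Then m_t ≤ (Γ(i-ψ)/Γ(i)) · Γ(t)/Γ(t-ψ) for all t ≥ i. -/
set_option maxHeartbeats 1000000


open Finset

/-- Gamma-quotient upper bound for the recursion m_{t+1} = m_t + (∑_{s=i}^t m_s)/(t(t+1)). -/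
theorem mean_degree_gamma_upper_bound (i : ℕ) (hi : 1 ≤ i)
    (m : ℕ → ℝ) (hnonneg : ∀ t, i ≤ t → 0 ≤ m t) (hinit : m i = 1)
    (hrec : ∀ t, i ≤ t →
      m (t + 1) = m t + (1 / ((t : ℝ) * (t + 1))) * ∑ s ∈ Finset.Icc i t, m s) :
    let ψ : ℝ := 1 / ((1 + Real.sqrt 5) / 2)
    ∀ t, i ≤ t →
      m t ≤ (Real.Gamma ((i : ℝ) - ψ) / Real.Gamma i) *
        (Real.Gamma t / Real.Gamma ((t : ℝ) - ψ)) := by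
  intro ψ
  have hs0 : (0:ℝ) ≤ Real.sqrt 5 := Real.sqrt_nonneg 5
  have hs : Real.sqrt 5 ^ 2 = 5 := Real.sq_sqrt (by norm_num)
  have hs2 : (2:ℝ) ≤ Real.sqrt 5 := by nlinarith
  have hs3 : Real.sqrt 5 ≤ 9/4 := by nlinarith
  have hsne : (0:ℝ) < 1 + Real.sqrt 5 := by linarith
  have hψval : ψ = 2 / (1 + Real.sqrt 5) := by
    show 1 / ((1 + Real.sqrt 5) / 2) = _
    rw [one_div_div]
  have hψ2 : ψ ^ 2 + ψ = 1 := by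
    rw [hψval]; field_simp; nlinarith
  have hψl : (1:ℝ)/2 ≤ ψ := by
    rw [hψval, le_div_iff₀ hsne]; linarith
  have hψu : ψ ≤ 2/3 := by
    rw [hψval, div_le_iff₀ hsne]; linarith
  have hψpos : (0:ℝ) < ψ := by linarith
  -- Abbreviations
  set G : ℕ → ℝ := fun t =>
    Real.Gamma ((i : ℝ) - ψ) / Real.Gamma i * (Real.Gamma t / Real.Gamma ((t : ℝ) - ψ)) with hG
  have hi1 : (1:ℝ) ≤ (i:ℝ) := by exact_mod_cast hi
  have hipos : (0:ℝ) < (i:ℝ) := by linarith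
  have hGi_pos : 0 < Real.Gamma ((i:ℝ)) := Real.Gamma_pos_of_pos hipos
  have hGiψ_pos : 0 < Real.Gamma ((i:ℝ) - ψ) := Real.Gamma_pos_of_pos (by linarith)
  have hGbase : G i = 1 := by
    simp only [hG]
    field_simp
  have hGstep : ∀ t : ℕ, i ≤ t → G (t+1) = G t * ((t:ℝ) / ((t:ℝ) - ψ)) := by
    intro t ht
    have ht1 : (1:ℝ) ≤ (t:ℝ) := by exact_mod_cast hi.trans ht
    have htpos : (0:ℝ) < (t:ℝ) := by linarith
    have htψ : (0:ℝ) < (t:ℝ) - ψ := by linarith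
    have hGt_pos : 0 < Real.Gamma ((t:ℝ)) := Real.Gamma_pos_of_pos htpos
    have hGtψ_pos : 0 < Real.Gamma ((t:ℝ) - ψ) := Real.Gamma_pos_of_pos htψ
    have e1 : Real.Gamma ((t+1 : ℕ) : ℝ) = (t:ℝ) * Real.Gamma t := by
      push_cast
      rw [Real.Gamma_add_one (ne_of_gt htpos)]
    have e2 : Real.Gamma (((t+1 : ℕ) : ℝ) - ψ) = ((t:ℝ) - ψ) * Real.Gamma ((t:ℝ) - ψ) := by
      push_cast
      rw [show (t:ℝ) + 1 - ψ = ((t:ℝ) - ψ) + 1 by ring,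
        Real.Gamma_add_one (ne_of_gt htψ)]
    simp only [hG, e1, e2]
    field_simp
  -- the key joint induction
  have key : ∀ t, i ≤ t → m t ≤ G t ∧
      (∑ s ∈ Finset.Icc i t, m s) ≤ ψ * ((t:ℝ) + 1) * m t := by
    refine Nat.le_induction ?_ ?_
    · refine ⟨by rw [hinit, hGbase], ?_⟩
      rw [Finset.Icc_self, Finset.sum_singleton, hinit]
      have : (2:ℝ) ≤ (i:ℝ) + 1 := by
        have : (1:ℝ) ≤ (i:ℝ) := by exact_mod_cast hi
        linarith
      nlinarith
    · rintro t ht ⟨IH1, IH2⟩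
      have ht1 : (1:ℝ) ≤ (t:ℝ) := by exact_mod_cast hi.trans ht
      have htpos : (0:ℝ) < (t:ℝ) := by linarith
      have htψ : (0:ℝ) < (t:ℝ) - ψ := by linarith
      have hm : 0 ≤ m t := hnonneg t ht
      have hm' : 0 ≤ m (t+1) := hnonneg (t+1) (ht.trans (Nat.le_succ t))
      have hSnn : 0 ≤ ∑ s ∈ Finset.Icc i t, m s := by
        apply Finset.sum_nonneg
        intro s hs
        exact hnonneg s (Finset.mem_Icc.mp hs).1
      set a : ℝ := ∑ s ∈ Finset.Icc i t, m s with ha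
      have hrect := hrec t ht
      have hPpos : (0:ℝ) < (t:ℝ) * ((t:ℝ)+1) := by positivity
      -- first part : m (t+1) ≤ G (t+1)
      have part1 : m (t+1) ≤ G (t+1) := by
        have h1 : m (t+1) ≤ m t * (((t:ℝ) + ψ) / (t:ℝ)) := by
          rw [hrect]
          have hb : (1 / ((t:ℝ) * ((t:ℝ)+1))) * a ≤
              (1 / ((t:ℝ) * ((t:ℝ)+1))) * (ψ * ((t:ℝ)+1) * m t) := by
            apply mul_le_mul_of_nonneg_left IH2 (by positivity)
          calc m t + (1 / ((t:ℝ) * ((t:ℝ)+1))) * a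
              ≤ m t + (1 / ((t:ℝ) * ((t:ℝ)+1))) * (ψ * ((t:ℝ)+1) * m t) := by linarith
            _ = m t * (((t:ℝ) + ψ) / (t:ℝ)) := by field_simp
        have h2 : m t * (((t:ℝ) + ψ) / (t:ℝ)) ≤ m t * ((t:ℝ) / ((t:ℝ) - ψ)) := by
          apply mul_le_mul_of_nonneg_left _ hm
          rw [div_le_div_iff₀ htpos htψ]
          nlinarith [sq_nonneg ψ]
        have h3 : m t * ((t:ℝ) / ((t:ℝ) - ψ)) ≤ G t * ((t:ℝ) / ((t:ℝ) - ψ)) := by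
          apply mul_le_mul_of_nonneg_right IH1 (by positivity)
        rw [hGstep t ht]
        linarith
      refine ⟨part1, ?_⟩
      -- second part: sum bound
      have hsum : (∑ s ∈ Finset.Icc i (t+1), m s) = a + m (t+1) := by
        rw [Finset.sum_Icc_succ_top (ht.trans (Nat.le_succ t))]
      have hd : m (t+1) * ((t:ℝ) * ((t:ℝ)+1)) = m t * ((t:ℝ) * ((t:ℝ)+1)) + a := by
        rw [hrect]; field_simp; rw [ha]
      have h0 : 0 ≤ ψ * ((t:ℝ)+2) - 1 := by nlinarith [mul_nonneg (by linarith : (0:ℝ) ≤ ψ - 1/2) (by linarith : (0:ℝ) ≤ (t:ℝ) - 1)]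
      have h23 : (0:ℝ) ≤ 2 * ψ^2 - ψ := by linarith
      have hgoal' : a * ((t:ℝ) * ((t:ℝ)+1)) ≤ (ψ * ((t:ℝ)+2) - 1) * (m (t+1) * ((t:ℝ) * ((t:ℝ)+1))) := by
        rw [hd]
        nlinarith [mul_nonneg (mul_nonneg h0 htpos.le) (sub_nonneg.2 IH2),
          mul_nonneg hSnn h23,
          (by rw [hψ2, mul_one] : (t:ℝ) * (ψ^2 + ψ) = (t:ℝ)),
          mul_nonneg hSnn hψpos.le, hψ2]
      have h5 : a ≤ (ψ * ((t:ℝ)+2) - 1) * m (t+1) := by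
        rw [← mul_le_mul_iff_of_pos_right hPpos]
        nlinarith [hgoal']
      rw [hsum]
      push_cast
      nlinarith [h5]
  intro t ht
  exact (key t ht).1
end

section
/- Fix an integer i ≥ 1 and let β_{t+1} = F_t(β_t) with β_i = i, where F_t(x) = (x(t+1)+1)/(x + t + 1/(t+1)). Then 1 ≤ β_t for all t ≥ i, lim_{t→∞} β_t = φ = (1+√5)/2, and there exists a finite T(i) ≥ i such that t ↦ β_t is strictly decreasing for i ≤ t < T(i) and strictly increasing for t ≥ T(i). -/
open Filter

lemma aux_cert (s b : ℝ) (hs : 2 ≤ s) (hb : 1 ≤ b) (h : b ≤ (1+b-b^2)*s) :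
    0 < (s+1)*(((b*s+1)+s^2-s)^2 + (b*s+1)*((b*s+1)+s^2-s)*s - (b*s+1)^2*s^2)
        - (b*s+1)*((b*s+1)+s^2-s)*s := by
  have hq : (0:ℝ) ≤ s^4 - s^2 - s := by nlinarith [sq_nonneg s, sq_nonneg (s-2)]
  have h1 : 0 ≤ ((1+b-b^2)*s - b) * (s^4 - s^2 - s) := mul_nonneg (by linarith) hq
  nlinarith [h1]

set_option maxHeartbeats 800000 in
/-- The annealed sequence β_{t+1} = F_t(β_t), β_i = i, satisfies β_t ≥ 1, converges to
the golden ratio φ, and is strictly decreasing up to some finite time T(i) ≥ i and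
strictly increasing afterwards. -/
theorem beta_convergence_and_crossover (i : ℕ) (hi : 1 ≤ i)
    (β : ℕ → ℝ) (hinit : β i = i)
    (hrec : ∀ t, i ≤ t →
      β (t + 1) = (β t * (t + 1) + 1) / (β t + t + 1 / ((t : ℝ) + 1))) :
    (∀ t, i ≤ t → 1 ≤ β t) ∧
      Tendsto β atTop (nhds ((1 + Real.sqrt 5) / 2)) ∧
      ∃ T : ℕ, i ≤ T ∧
        (∀ t, i ≤ t → t + 1 < T → β (t + 1) < β t) ∧
        (∀ t, T ≤ t → β t < β (t + 1)) := by
  have hs5 : Real.sqrt 5 ^ 2 = 5 := Real.sq_sqrt (by norm_num)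
  have hs5l : 2 ≤ Real.sqrt 5 := by nlinarith [Real.sqrt_nonneg 5]
  have hs5u : Real.sqrt 5 ≤ 3 := by nlinarith [Real.sqrt_nonneg 5]
  set φ : ℝ := (1 + Real.sqrt 5)/2 with hφdef
  have hφ2 : φ^2 = φ + 1 := by rw [hφdef]; linear_combination hs5/4
  have hφl : (3:ℝ)/2 ≤ φ := by rw [hφdef]; linarith
  have hφu : φ ≤ 2 := by rw [hφdef]; linarith
  have hφpos : (0:ℝ) < φ := by linarith
  have hi1 : (1:ℝ) ≤ (i:ℝ) := by exact_mod_cast hi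
  -- lower bound
  have hlow : ∀ t, i ≤ t → 1 ≤ β t := by
    intro t ht
    induction t, ht using Nat.le_induction with
    | base => rw [hinit]; exact hi1
    | succ t ht ih =>
      have hs0 : (0:ℝ) < (t:ℝ)+1 := by positivity
      have hx : (0:ℝ) < 1/((t:ℝ)+1) := by positivity
      have hx1 : 1/((t:ℝ)+1) ≤ 1 := by rw [div_le_one hs0]; linarith [(Nat.cast_nonneg t : (0:ℝ) ≤ t)]
      have hD : 0 < β t + t + 1/((t:ℝ)+1) := by
        have := (Nat.cast_nonneg t : (0:ℝ) ≤ t); linarith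
      rw [hrec t ht, le_div_iff₀ hD]
      nlinarith [mul_nonneg (sub_nonneg.2 ih) ((Nat.cast_nonneg t : (0:ℝ) ≤ t))]
  have hD : ∀ t, i ≤ t → 0 < β t + t + 1/((t:ℝ)+1) := by
    intro t ht
    have h1 := hlow t ht
    have h2 := (Nat.cast_nonneg t : (0:ℝ) ≤ t)
    have h3 : (0:ℝ) < 1/((t:ℝ)+1) := by positivity
    linarith
  have hmul : ∀ t, i ≤ t → β (t+1) * (β t + t + 1/((t:ℝ)+1)) = β t * ((t:ℝ)+1) + 1 := by
    intro t ht
    rw [hrec t ht, div_mul_cancel₀ _ (hD t ht).ne']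
  have hdiff : ∀ t, i ≤ t → β (t+1) - β t
      = (1 + β t - β t^2 - β t * (1/((t:ℝ)+1))) / (β t + t + 1/((t:ℝ)+1)) := by
    intro t ht
    rw [eq_div_iff (hD t ht).ne']
    linear_combination hmul t ht
  have hphi : ∀ t, i ≤ t → β (t+1) - φ
      = (((t:ℝ)+1-φ)*(β t-φ) - φ*(1/((t:ℝ)+1))) / (β t + t + 1/((t:ℝ)+1)) := by
    intro t ht
    rw [eq_div_iff (hD t ht).ne']
    linear_combination hmul t ht - hφ2
  -- quantitative convergence bound
  set M : ℝ := max 3 (((i:ℝ)+1)*(i:ℝ)) with hMdef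
  have hM3 : (3:ℝ) ≤ M := le_max_left _ _
  have hMi : ((i:ℝ)+1)*(i:ℝ) ≤ M := le_max_right _ _
  have hbound : ∀ t, i ≤ t → |β t - φ| ≤ M/((t:ℝ)+1) := by
    intro t ht
    induction t, ht using Nat.le_induction with
    | base =>
      have h1 : |(i:ℝ) - φ| ≤ (i:ℝ) := abs_le.2 ⟨by linarith, by linarith⟩
      rw [hinit, le_div_iff₀ (by positivity : (0:ℝ) < (i:ℝ)+1)]
      calc |(i:ℝ) - φ| * ((i:ℝ)+1) ≤ (i:ℝ) * ((i:ℝ)+1) :=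
            mul_le_mul_of_nonneg_right h1 (by positivity)
        _ ≤ M := by rw [mul_comm]; exact hMi
    | succ t ht ih =>
      have h1t : (1:ℝ) ≤ (t:ℝ) := by exact_mod_cast le_trans hi ht
      have hs0 : (0:ℝ) < (t:ℝ)+1 := by linarith
      have hx0 : (0:ℝ) < 1/((t:ℝ)+1) := by positivity
      have hDl : (t:ℝ)+1 ≤ β t + t + 1/((t:ℝ)+1) := by
        have := hlow t ht; linarith
      have hDpos := hD t ht
      rw [hphi t ht, abs_div, abs_of_pos hDpos]
      have hnum : |((t:ℝ)+1-φ)*(β t-φ) - φ*(1/((t:ℝ)+1))|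
          ≤ (((t:ℝ)+1-φ)*M + φ)/((t:ℝ)+1) := by
        have e1 : |((t:ℝ)+1-φ)*(β t-φ) - φ*(1/((t:ℝ)+1))|
            ≤ |((t:ℝ)+1-φ)*(β t-φ)| + |φ*(1/((t:ℝ)+1))| := abs_sub _ _
        rw [abs_mul, abs_mul, abs_of_nonneg (by linarith : (0:ℝ) ≤ (t:ℝ)+1-φ),
          abs_of_pos hφpos, abs_of_pos hx0] at e1
        have e2 : ((t:ℝ)+1-φ)*|β t-φ| ≤ ((t:ℝ)+1-φ)*(M/((t:ℝ)+1)) :=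
          mul_le_mul_of_nonneg_left ih (by linarith)
        have e3 : (((t:ℝ)+1-φ)*(M/((t:ℝ)+1)) + φ*(1/((t:ℝ)+1)))
            = (((t:ℝ)+1-φ)*M + φ)/((t:ℝ)+1) := by ring
        linarith
      have hnn : (0:ℝ) ≤ (((t:ℝ)+1-φ)*M + φ)/((t:ℝ)+1) := le_trans (abs_nonneg _) hnum
      calc |((t:ℝ)+1-φ)*(β t-φ) - φ*(1/((t:ℝ)+1))| / (β t + t + 1/((t:ℝ)+1))
          ≤ ((((t:ℝ)+1-φ)*M + φ)/((t:ℝ)+1)) / ((t:ℝ)+1) := by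
            apply div_le_div₀ hnn hnum hs0 hDl
        _ = (((t:ℝ)+1-φ)*M + φ)/(((t:ℝ)+1)*((t:ℝ)+1)) := by rw [div_div]
        _ ≤ M/((t:ℝ)+1+1) := by
            rw [div_le_div_iff₀ (by positivity) (by positivity)]
            nlinarith [mul_nonneg (by linarith : (0:ℝ) ≤ M - 3) (by linarith : (0:ℝ) ≤ (t:ℝ)),
              mul_nonneg (mul_nonneg (by linarith : (0:ℝ) ≤ M - 1)
                (by linarith : (0:ℝ) ≤ (t:ℝ)+2)) (by linarith : (0:ℝ) ≤ φ - 3/2)]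
        _ = M/(((t+1:ℕ):ℝ)+1) := by push_cast; ring
  -- convergence
  have hconv : Tendsto β atTop (nhds φ) := by
    have h0 : Tendsto (fun t : ℕ => β t - φ) atTop (nhds 0) := by
      refine squeeze_zero_norm'
        (eventually_atTop.2 ⟨i, fun t ht => by simpa [Real.norm_eq_abs] using hbound t ht⟩) ?_
      · have h1 : Tendsto (fun n : ℕ => M/(n:ℝ)) atTop (nhds 0) :=
          tendsto_const_div_atTop_nhds_zero_nat M
        have h2 := h1.comp (tendsto_add_atTop_nat 1)
        convert h2 using 2 with t
        simp only [Function.comp_apply]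
        push_cast; ring
    have h1 := h0.add (tendsto_const_nhds (α := ℕ) (x := φ))
    simpa using h1
  -- once non-decreasing, strictly increasing forever
  have hstep5 : ∀ t, i ≤ t → β t ≤ β (t+1) → β (t+1) < β (t+2) := by
    intro t ht hmono
    have h1t : (1:ℝ) ≤ (t:ℝ) := by exact_mod_cast le_trans hi ht
    have hs0 : (0:ℝ) < (t:ℝ)+1 := by linarith
    have hb1 := hlow t ht
    have hDpos := hD t ht
    -- N_t ≥ 0
    have hN : 0 ≤ 1 + β t - β t^2 - β t * (1/((t:ℝ)+1)) := by
      have h2 : 0 ≤ (1 + β t - β t^2 - β t*(1/((t:ℝ)+1)))/(β t + t + 1/((t:ℝ)+1)) := by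
        rw [← hdiff t ht]; linarith
      rcases div_nonneg_iff.mp h2 with ⟨h3,_⟩|⟨_,h4⟩
      · exact h3
      · linarith
    have hH : β t ≤ (1 + β t - β t^2) * ((t:ℝ)+1) := by
      have e1 : (1 + β t - β t^2 - β t * (1/((t:ℝ)+1))) * ((t:ℝ)+1)
          = (1 + β t - β t^2)*((t:ℝ)+1) - β t := by
        field_simp
      have e2 : 0 ≤ (1 + β t - β t^2 - β t * (1/((t:ℝ)+1))) * ((t:ℝ)+1) :=
        mul_nonneg hN hs0.le
      linarith
    have hcert := aux_cert ((t:ℝ)+1) (β t) (by linarith) hb1 hH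
    -- N_{t+1} > 0
    have ht1 : i ≤ t+1 := le_trans ht (Nat.le_succ t)
    have hA := hmul t ht
    have hB : ((t:ℝ)+1)*(β t + t + 1/((t:ℝ)+1))
        = (β t*((t:ℝ)+1)+1)+((t:ℝ)+1)^2-((t:ℝ)+1) := by
      field_simp; ring
    have e1 : ((1 + β (t+1) - β (t+1)^2)*(((t:ℝ)+1)+1) - β (t+1))
          * (((t:ℝ)+1)*(β t + t + 1/((t:ℝ)+1)))^2
        = (((t:ℝ)+1)+1)*((((t:ℝ)+1)*(β t + t + 1/((t:ℝ)+1)))^2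
            + (β (t+1)*(β t + t + 1/((t:ℝ)+1)))*(((t:ℝ)+1)*(β t + t + 1/((t:ℝ)+1)))*((t:ℝ)+1)
            - (β (t+1)*(β t + t + 1/((t:ℝ)+1)))^2*((t:ℝ)+1)^2)
          - (β (t+1)*(β t + t + 1/((t:ℝ)+1)))*(((t:ℝ)+1)*(β t + t + 1/((t:ℝ)+1)))*((t:ℝ)+1) := by
      ring
    rw [hA, hB] at e1
    have hpos2 : 0 < ((1 + β (t+1) - β (t+1)^2)*(((t:ℝ)+1)+1) - β (t+1))
          * (β t*((t:ℝ)+1)+1+((t:ℝ)+1)^2-((t:ℝ)+1))^2 := by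
      rw [e1]; linarith [hcert]
    have hsq : 0 < (β t*((t:ℝ)+1)+1+((t:ℝ)+1)^2-((t:ℝ)+1))^2 := by
      rw [← hB]
      have := mul_pos hs0 hDpos
      positivity
    have hN2 : 0 < (1 + β (t+1) - β (t+1)^2)*(((t:ℝ)+1)+1) - β (t+1) := by
      rcases mul_pos_iff.mp hpos2 with ⟨h5,_⟩|⟨_,h6⟩
      · exact h5
      · linarith
    have hNpos : 0 < 1 + β (t+1) - β (t+1)^2 - β (t+1) * (1/(((t:ℝ)+1)+1)) := by
      have h3 : 1 + β (t+1) - β (t+1)^2 - β (t+1)*(1/(((t:ℝ)+1)+1))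
          = ((1 + β (t+1) - β (t+1)^2)*(((t:ℝ)+1)+1) - β (t+1))/(((t:ℝ)+1)+1) := by
        field_simp
      rw [h3]
      exact div_pos hN2 (by linarith)
    have hd2 := hdiff (t+1) ht1
    have hD2 := hD (t+1) ht1
    push_cast at hd2 hD2
    have : 0 < β (t+1+1) - β (t+1) := by
      rw [hd2]
      exact div_pos hNpos hD2
    have h2 : β (t+1+1) = β (t+2) := rfl
    linarith [h2 ▸ this]
  -- existence of a non-decreasing step
  have hexists : ∃ t, i ≤ t ∧ β t ≤ β (t+1) := by
    by_contra hcon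
    push_neg at hcon
    have hanti : ∀ s t, i ≤ s → s ≤ t → β t ≤ β s := by
      intro s t hs hst
      induction t, hst using Nat.le_induction with
      | base => exact le_rfl
      | succ t hst ih => exact le_trans (le_of_lt (hcon t (le_trans hs hst))) ih
    have hub : ∀ t, i ≤ t → β t ≤ (i:ℝ) := fun t ht => hinit ▸ hanti i t le_rfl ht
    have hgtφ : ∀ t, i ≤ t → φ < β t := by
      intro t ht
      have hle : φ ≤ β (t+1) :=
        le_of_tendsto hconv (eventually_atTop.2
          ⟨t+1, fun u hu => hanti (t+1) u (le_trans ht (Nat.le_succ t)) hu⟩)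
      exact lt_of_le_of_lt hle (hcon t ht)
    -- weighted distance decreases by a harmonic amount
    have hu : ∀ t, i ≤ t → ((t:ℝ)+2)*(β (t+1) - φ)
        ≤ ((t:ℝ)+1)*(β t - φ) - φ*(1/((t:ℝ)+(i:ℝ)+1)) := by
      intro t ht
      have h1t : (1:ℝ) ≤ (t:ℝ) := by exact_mod_cast le_trans hi ht
      have hs0 : (0:ℝ) < (t:ℝ)+1 := by linarith
      have hx0 : (0:ℝ) < 1/((t:ℝ)+1) := by positivity
      have hx1 : 1/((t:ℝ)+1) ≤ 1 := by rw [div_le_one hs0]; linarith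
      have hgt := hgtφ t ht
      have hub' := hub t ht
      have hDpos := hD t ht
      have hDl : (t:ℝ) + φ ≤ β t + t + 1/((t:ℝ)+1) := by linarith
      have hDu : β t + t + 1/((t:ℝ)+1) ≤ (t:ℝ) + i + 1 := by linarith
      have hipos : (0:ℝ) < (t:ℝ)+(i:ℝ)+1 := by linarith
      have hL : ((t:ℝ)+2)*(β (t+1) - φ)
          = (((t:ℝ)+2)*(((t:ℝ)+1-φ)*(β t-φ) - φ*(1/((t:ℝ)+1))))/(β t + t + 1/((t:ℝ)+1)) := by
        rw [hphi t ht]; ring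
      rw [hL, div_le_iff₀ hDpos]
      have k1 : ((t:ℝ)+2)*((t:ℝ)+1-φ) ≤ ((t:ℝ)+1)*((t:ℝ)+φ) := by
        nlinarith [mul_nonneg (by linarith : (0:ℝ) ≤ φ - 3/2) (by linarith : (0:ℝ) ≤ (t:ℝ))]
      have k2 : ((t:ℝ)+2)*(((t:ℝ)+1-φ)*(β t-φ))
          ≤ (((t:ℝ)+1)*(β t - φ))*(β t + t + 1/((t:ℝ)+1)) := by
        calc ((t:ℝ)+2)*(((t:ℝ)+1-φ)*(β t-φ)) = (((t:ℝ)+2)*((t:ℝ)+1-φ))*(β t-φ) := by ring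
          _ ≤ (((t:ℝ)+1)*((t:ℝ)+φ))*(β t-φ) :=
              mul_le_mul_of_nonneg_right k1 (by linarith)
          _ ≤ (((t:ℝ)+1)*(β t + t + 1/((t:ℝ)+1)))*(β t-φ) := by
              have := mul_le_mul_of_nonneg_left hDl (by linarith : (0:ℝ) ≤ (t:ℝ)+1)
              exact mul_le_mul_of_nonneg_right this (by linarith)
          _ = (((t:ℝ)+1)*(β t - φ))*(β t + t + 1/((t:ℝ)+1)) := by ring
      have k4 : φ*(1/((t:ℝ)+(i:ℝ)+1)) * (β t + t + 1/((t:ℝ)+1)) ≤ φ := by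
        rw [mul_one_div, div_mul_eq_mul_div, div_le_iff₀ hipos]
        nlinarith [mul_le_mul_of_nonneg_left hDu hφpos.le]
      have k5 : φ ≤ ((t:ℝ)+2)*(φ*(1/((t:ℝ)+1))) := by
        have hxs : (((t:ℝ)+1))*(1/((t:ℝ)+1)) = 1 := mul_one_div_cancel hs0.ne'
        have e : ((t:ℝ)+2)*(φ*(1/((t:ℝ)+1)))
            = φ*(((t:ℝ)+1)*(1/((t:ℝ)+1))) + φ*(1/((t:ℝ)+1)) := by ring
        rw [e, hxs]
        nlinarith [mul_pos hφpos hx0]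
      nlinarith [k2, k4, k5]
    -- telescoping
    have htel : ∀ n : ℕ, ((i:ℝ)+n+1)*(β (i+n) - φ)
        ≤ ((i:ℝ)+1)*(β i - φ) - φ * ∑ k ∈ Finset.range n, 1/((i:ℝ)+k+(i:ℝ)+1) := by
      intro n
      induction n with
      | zero => simp
      | succ n ih =>
        have h := hu (i+n) (Nat.le_add_right i n)
        push_cast at h
        rw [Finset.sum_range_succ, mul_add]
        have e : β (i+n+1) = β (i+(n+1)) := by ring_nf
        rw [e] at h
        push_cast
        linarith
    -- divergence of the harmonic-type sum
    have hharm : Tendsto (fun n : ℕ => ∑ k ∈ Finset.range n, 1/((i:ℝ)+k+(i:ℝ)+1)) atTop atTop := by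
      have h0 := Real.tendsto_sum_range_one_div_nat_succ_atTop
      have hrep : ∀ n : ℕ, ∑ k ∈ Finset.range n, 1/((i:ℝ)+k+(i:ℝ)+1)
          = (∑ k ∈ Finset.range (2*i+n), 1/((k:ℝ)+1)) - ∑ k ∈ Finset.range (2*i), 1/((k:ℝ)+1) := by
        intro n
        rw [Finset.sum_range_add]
        have : ∀ k ∈ Finset.range n, 1/(((2*i+k:ℕ):ℝ)+1) = 1/((i:ℝ)+k+(i:ℝ)+1) := by
          intro k _; push_cast; ring_nf
        rw [Finset.sum_congr rfl this]
        ring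
      have h1 : Tendsto (fun n : ℕ => ∑ k ∈ Finset.range (2*i+n), 1/((k:ℝ)+1)) atTop atTop := by
        have h2 := h0.comp (tendsto_add_atTop_nat (2*i))
        refine h2.congr fun n => ?_
        simp only [Function.comp_apply]
        rw [Nat.add_comm]
      have h3 := tendsto_atTop_add_const_right atTop
        (-(∑ k ∈ Finset.range (2*i), 1/((k:ℝ)+1))) h1
      refine h3.congr fun n => ?_
      rw [hrep n]; ring
    -- contradiction
    obtain ⟨n, hn⟩ := (hharm.eventually_gt_atTop
      ((((i:ℝ)+1)*(β i - φ))/φ)).exists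
    have hn2 : ((i:ℝ)+1)*(β i - φ) < φ * ∑ k ∈ Finset.range n, 1/((i:ℝ)+k+(i:ℝ)+1) := by
      rw [← div_lt_iff₀' hφpos]
      exact hn
    have hpos : 0 < ((i:ℝ)+n+1)*(β (i+n) - φ) := by
      have h1 := hgtφ (i+n) (Nat.le_add_right i n)
      have h2 : (0:ℝ) < (i:ℝ)+n+1 := by positivity
      exact mul_pos h2 (by linarith)
    linarith [htel n]
  -- assemble T
  classical
  let T : ℕ := Nat.find hexists + 1
  have hspec := Nat.find_spec hexists
  refine ⟨hlow, hconv, T, le_trans hspec.1 (Nat.le_succ _), ?_, ?_⟩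
  · intro t ht hlt
    have hmin := Nat.find_min hexists (show t < Nat.find hexists by omega)
    push_neg at hmin
    exact hmin ht
  · intro t ht
    induction t, ht using Nat.le_induction with
    | base => exact hstep5 (Nat.find hexists) hspec.1 hspec.2
    | succ t ht2 ih =>
      exact hstep5 t (le_trans hspec.1 (by omega)) (le_of_lt ih)
end

section
/- Suppose nonnegative reals {Δ̃_t}_{t≥T} satisfy Δ̃_{t+1} ≤ δ_t + η̃_t Δ̃_t, where δ_t ≥ 0 with ∑_{t≥T} δ_t < ∞, and η̃_t ∈ (0,1) satisfies 1 - η̃_t = 1/t + O(1/t²). Then lim_{t→∞} Δ̃_t = 0. -/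
open Filter

lemma aux_unroll (T : ℕ) (Δ δ η : ℕ → ℝ)
    (hΔ : ∀ t, T ≤ t → 0 ≤ Δ t)
    (hδ : ∀ t, T ≤ t → 0 ≤ δ t)
    (hη : ∀ t, T ≤ t → η t ∈ Set.Ioo (0 : ℝ) 1)
    (hrec : ∀ t, T ≤ t → Δ (t + 1) ≤ δ t + η t * Δ t)
    (S : ℕ) (hS : T ≤ S) :
    ∀ t, S ≤ t → Δ t ≤ (∏ s ∈ Finset.Ico S t, η s) * Δ S + ∑ s ∈ Finset.Ico S t, δ s := by
  intro t ht
  induction t, ht using Nat.le_induction with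
  | base => simp
  | succ t ht ih =>
    have hTt : T ≤ t := hS.trans ht
    have h1 := hrec t hTt
    have hηt := hη t hTt
    have hP : 0 ≤ ∏ s ∈ Finset.Ico S t, η s :=
      Finset.prod_nonneg fun s hs => (hη s (hS.trans (Finset.mem_Ico.mp hs).1)).1.le
    have hsum0 : 0 ≤ ∑ s ∈ Finset.Ico S t, δ s :=
      Finset.sum_nonneg fun s hs => hδ s (hS.trans (Finset.mem_Ico.mp hs).1)
    rw [Finset.prod_Ico_succ_top ht, Finset.sum_Ico_succ_top ht]
    have hΔS := hΔ S hS
    have k1 : η t * Δ t ≤ η t * ((∏ s ∈ Finset.Ico S t, η s) * Δ S + ∑ s ∈ Finset.Ico S t, δ s) :=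
      mul_le_mul_of_nonneg_left ih hηt.1.le
    have k2 : η t * ∑ s ∈ Finset.Ico S t, δ s ≤ ∑ s ∈ Finset.Ico S t, δ s :=
      mul_le_of_le_one_left hsum0 hηt.2.le
    nlinarith [k1, k2]

lemma aux_harmonic : Tendsto (fun n => ∑ i ∈ Finset.range n, (1 : ℝ) / (2 * i)) atTop atTop := by
  have hns : ¬ Summable (fun i : ℕ => (1 : ℝ) / (2 * i)) := by
    intro h
    have h2 : Summable (fun i : ℕ => (2 : ℝ) * ((1 : ℝ) / (2 * i))) := h.mul_left 2
    have : Summable (fun i : ℕ => (1 : ℝ) / i) := by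
      apply h2.congr_cofinite
      filter_upwards [Set.Finite.compl_mem_cofinite (Set.finite_singleton 0)] with i hi
      have : (i : ℝ) ≠ 0 := Nat.cast_ne_zero.mpr (by simpa using hi)
      field_simp
    exact Real.not_summable_one_div_natCast this
  have hnn : ∀ i : ℕ, 0 ≤ (1 : ℝ) / (2 * i) := fun i => by positivity
  exact (not_summable_iff_tendsto_nat_atTop_of_nonneg hnn).mp hns

lemma aux_prod_tendsto (η : ℕ → ℝ) (S : ℕ)
    (h1 : ∀ s, S ≤ s → 0 ≤ η s)
    (h2 : ∀ s, S ≤ s → 1 - η s ≥ 1 / (2 * s)) :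
    Tendsto (fun t => ∏ s ∈ Finset.Ico S t, η s) atTop (nhds 0) := by
  have hub : ∀ t, S ≤ t → ∏ s ∈ Finset.Ico S t, η s ≤
      Real.exp (∑ s ∈ Finset.Ico S t, (η s - 1)) := by
    intro t ht
    rw [Real.exp_sum]
    apply Finset.prod_le_prod
    · intro s hs; exact h1 s (Finset.mem_Ico.mp hs).1
    · intro s hs
      have := Real.add_one_le_exp (η s - 1)
      linarith
  have hsum : Tendsto (fun t => ∑ s ∈ Finset.Ico S t, (η s - 1)) atTop atBot := by
    rw [tendsto_atBot]
    intro b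
    have hdiv : Tendsto (fun t => ∑ s ∈ Finset.Ico S t, (1 : ℝ) / (2 * s)) atTop atTop := by
      have hsplit : Tendsto (fun t => (∑ i ∈ Finset.range t, (1 : ℝ) / (2 * i))
          - ∑ i ∈ Finset.range S, (1 : ℝ) / (2 * i)) atTop atTop :=
        aux_harmonic.atTop_add tendsto_const_nhds
      apply hsplit.congr'
      filter_upwards [eventually_ge_atTop S] with t ht
      rw [eq_comm, Finset.sum_Ico_eq_sub _ ht]
    filter_upwards [hdiv.eventually_ge_atTop (-b), eventually_ge_atTop S] with t hdt hts
    have hle : ∑ s ∈ Finset.Ico S t, (η s - 1) ≤ -∑ s ∈ Finset.Ico S t, (1 : ℝ) / (2 * s) := by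
      rw [← Finset.sum_neg_distrib]
      apply Finset.sum_le_sum
      intro s hs
      have := h2 s (Finset.mem_Ico.mp hs).1
      linarith
    linarith
  have hexp : Tendsto (fun t => Real.exp (∑ s ∈ Finset.Ico S t, (η s - 1))) atTop (nhds 0) :=
    Real.tendsto_exp_atBot.comp hsum
  apply squeeze_zero' ?_ ?_ hexp
  · filter_upwards [eventually_ge_atTop S] with t ht
    exact Finset.prod_nonneg fun s hs => h1 s (Finset.mem_Ico.mp hs).1
  · filter_upwards [eventually_ge_atTop S] with t ht
    exact hub t ht

/-- If 0 ≤ Δ̃_{t+1} ≤ δ_t + η̃_t Δ̃_t with δ_t ≥ 0 summable and η̃_t ∈ (0,1) satisfying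
1 - η̃_t = 1/t + O(1/t²), then Δ̃_t → 0. -/
theorem perturbed_contraction_to_zero (T : ℕ) (Δ δ η : ℕ → ℝ)
    (hΔ : ∀ t, T ≤ t → 0 ≤ Δ t)
    (hδ : ∀ t, T ≤ t → 0 ≤ δ t)
    (hδsum : Summable (fun t : ℕ => if T ≤ t then δ t else 0))
    (hη : ∀ t, T ≤ t → η t ∈ Set.Ioo (0 : ℝ) 1)
    (hrec : ∀ t, T ≤ t → Δ (t + 1) ≤ δ t + η t * Δ t)
    (hasymp : ∃ C : ℝ, ∀ t : ℕ, max T 1 ≤ t →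
      |1 - η t - 1 / (t : ℝ)| ≤ C / (t : ℝ) ^ 2) :
    Tendsto Δ atTop (nhds 0) := by
  obtain ⟨C, hC⟩ := hasymp
  set f : ℕ → ℝ := fun t => if T ≤ t then δ t else 0 with hf
  set S0 : ℕ := max (max T 1) (⌈2 * C⌉₊ + 1) with hS0
  have hS0T : T ≤ S0 := le_trans (le_max_left T 1) (le_max_left _ _)
  have hlow : ∀ s, S0 ≤ s → 1 - η s ≥ 1 / (2 * s) := by
    intro s hs
    have hs1 : max T 1 ≤ s := le_trans (le_max_left _ _) hs
    have hspos : (1 : ℕ) ≤ s := le_trans (le_max_right T 1) hs1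
    have hsr : (0 : ℝ) < s := by exact_mod_cast hspos
    have h2C : 2 * C ≤ (s : ℝ) := by
      have : (⌈2 * C⌉₊ : ℝ) ≤ s := by
        exact_mod_cast le_trans (Nat.le_succ _) (le_trans (le_max_right _ _) hs)
      exact le_trans (Nat.le_ceil _) this
    have habs := (abs_le.mp (hC s hs1)).1
    have h2 : C / (s : ℝ) ^ 2 ≤ 1 / (2 * s) := by
      rw [div_le_div_iff₀ (by positivity) (by positivity)]
      nlinarith
    have h3 : 1 / (s : ℝ) - 1 / (2 * s) = 1 / (2 * s) := by field_simp; ring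
    linarith
  rw [Metric.tendsto_atTop]
  intro ε hε
  have hfnn : ∀ i, 0 ≤ f i := by
    intro i
    simp only [hf]
    split
    · exact hδ i ‹_›
    · exact le_refl 0
  have htail : Tendsto (fun n => ∑ i ∈ Finset.range n, f i) atTop (nhds (∑' i, f i)) :=
    hδsum.hasSum.tendsto_sum_nat
  have hev : ∀ᶠ S in atTop, ∑' i, f i - ∑ i ∈ Finset.range S, f i < ε / 2 := by
    have h := htail.eventually
      (eventually_gt_nhds (show ∑' i, f i - ε / 2 < ∑' i, f i by linarith))
    filter_upwards [h] with S hS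
    linarith
  obtain ⟨S, hSS0, hStail⟩ := ((eventually_ge_atTop S0).and hev).exists
  have hTS : T ≤ S := hS0T.trans hSS0
  have hbound := aux_unroll T Δ δ η hΔ hδ hη hrec S hTS
  have hprod : Tendsto (fun t => ∏ s ∈ Finset.Ico S t, η s) atTop (nhds 0) :=
    aux_prod_tendsto η S
      (fun s hs => (hη s (hTS.trans hs)).1.le)
      (fun s hs => hlow s (hSS0.trans hs))
  have hsmall : ∀ᶠ t in atTop, (∏ s ∈ Finset.Ico S t, η s) * Δ S < ε / 2 :=
    (hprod.mul_const (Δ S)).eventually_lt_const (by simpa using half_pos hε)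
  have hfinal : ∀ᶠ t in atTop, dist (Δ t) 0 < ε := by
    filter_upwards [hsmall, eventually_ge_atTop S] with t hts htS
    have hb := hbound t htS
    have hsum_eq : ∑ s ∈ Finset.Ico S t, δ s = ∑ s ∈ Finset.Ico S t, f s := by
      refine Finset.sum_congr rfl fun s hs => ?_
      simp [hf, hTS.trans (Finset.mem_Ico.mp hs).1]
    have hsum_le : ∑ s ∈ Finset.Ico S t, f s ≤ ∑' i, f i - ∑ i ∈ Finset.range S, f i := by
      rw [Finset.sum_Ico_eq_sub _ htS]
      have := Summable.sum_le_tsum (Finset.range t) (fun i _ => hfnn i) hδsum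
      linarith
    have hΔt := hΔ t (hTS.trans htS)
    rw [Real.dist_eq, sub_zero, abs_of_nonneg hΔt]
    linarith
  obtain ⟨N, hN⟩ := eventually_atTop.mp hfinal
  exact ⟨N, hN⟩
end
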